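/- If a tree T₁ is obtained from a tree T by a single Kelmans transformation applied to an edge uv of T, then either T₁ is isomorphic to T, or the number of pendant vertices of T₁ equals the number of pendant vertices of T plus one, and the diameter of T₁ equals diam(T) or diam(T) − 1. -/
import Mathlib


open SimpleGraph Matrix BigOperators Finset

noncomputable section

/-- Distance matrix of a graph on `Fin n`, with real entries. -/
def distM {n : ℕ} (G : SimpleGraph (Fin n)) : Matrix (Fin n) (Fin n) ℝ :=
  fun i j => (G.dist i j : ℝ)

/-- Transmission of a vertex: sum of distances to all vertices. -/
def transm {n : ℕ} (G : SimpleGraph (Fin n)) (i : Fin n) : ℝ :=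
  ∑ j, (G.dist i j : ℝ)

/-- Diagonal matrix of transmissions. -/
def trM {n : ℕ} (G : SimpleGraph (Fin n)) : Matrix (Fin n) (Fin n) ℝ :=
  Matrix.diagonal (transm G)

/-- Distance signless Laplacian. -/
def DQ {n : ℕ} (G : SimpleGraph (Fin n)) : Matrix (Fin n) (Fin n) ℝ :=
  trM G + distM G

/-- The `D_α` matrix. -/
def Dalpha {n : ℕ} (G : SimpleGraph (Fin n)) (α : ℝ) : Matrix (Fin n) (Fin n) ℝ :=
  α • trM G + (1 - α) • distM G

/-- Largest eigenvalue of a real matrix. -/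
def lam1 {n : ℕ} (M : Matrix (Fin n) (Fin n) ℝ) : ℝ :=
  sSup {t : ℝ | ∃ v : Fin n → ℝ, v ≠ 0 ∧ M.mulVec v = t • v}

/-- Degree of a vertex. -/
def deg {n : ℕ} (G : SimpleGraph (Fin n)) (x : Fin n) : ℕ :=
  (G.neighborSet x).ncard

/-- Number of pendant (degree-one) vertices. -/
def pendants {n : ℕ} (G : SimpleGraph (Fin n)) : ℕ :=
  {x : Fin n | deg G x = 1}.ncard

/-- Diameter: supremum of pairwise distances. -/
def gdiam {n : ℕ} (G : SimpleGraph (Fin n)) : ℕ :=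
  sSup {d : ℕ | ∃ x y : Fin n, G.dist x y = d}

/-- The graph obtained by moving all edges at `v` except `vw` to `u`. -/
def shift {n : ℕ} (T : SimpleGraph (Fin n)) (u v w : Fin n) : SimpleGraph (Fin n) :=
  SimpleGraph.fromRel (fun a b =>
    (T.Adj a b ∧ ((a ≠ v ∧ b ≠ v) ∨ (a = v ∧ b = w) ∨ (b = v ∧ a = w))) ∨
    (a = u ∧ T.Adj v b ∧ b ≠ w))

/-- `T₁` is obtained from `T` by a proper generalized tree shift. -/
def IsProperGTS {n : ℕ} (T T₁ : SimpleGraph (Fin n)) : Prop :=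
  ∃ (u v w : Fin n) (p : T.Walk u v), u ≠ v ∧ p.IsPath ∧
    T.Adj w v ∧ w ∈ p.support ∧
    (∀ x ∈ p.support, x ≠ u → x ≠ v → deg T x = 2) ∧
    deg T u ≠ 1 ∧ deg T v ≠ 1 ∧ T₁ = shift T u v w

/-- The Kelmans transformation at vertices `u`, `v`. -/
def kelmans {n : ℕ} (T : SimpleGraph (Fin n)) (u v : Fin n) : SimpleGraph (Fin n) :=
  SimpleGraph.fromRel (fun a b =>
    (T.Adj a b ∧ ¬(a = v ∧ ¬T.Adj u b ∧ b ≠ u) ∧ ¬(b = v ∧ ¬T.Adj u a ∧ a ≠ u)) ∨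
    (a = u ∧ T.Adj v b ∧ ¬T.Adj u b ∧ b ≠ u))

/-- Collapse the edge `ab` (identifying into `a`) and reuse `b` as a new pendant at `a`. -/
def collapseAddPendant {n : ℕ} (T : SimpleGraph (Fin n)) (a b : Fin n) : SimpleGraph (Fin n) :=
  SimpleGraph.fromRel (fun x y =>
    (x ≠ a ∧ x ≠ b ∧ y ≠ a ∧ y ≠ b ∧ T.Adj x y) ∨
    (x = a ∧ y ≠ a ∧ y ≠ b ∧ (T.Adj a y ∨ T.Adj b y)) ∨
    (x = a ∧ y = b))

/-- The star `K_{1,n-1}` with centre `0`. -/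
def starG (n : ℕ) [NeZero n] : SimpleGraph (Fin n) :=
  SimpleGraph.fromRel (fun a b => a = 0 ∨ b = 0)

/-- Irreducibility of a nonnegative matrix. -/
def IrreducibleM {n : ℕ} (M : Matrix (Fin n) (Fin n) ℝ) : Prop :=
  ∀ i j : Fin n, i ≠ j → ∃ k : ℕ, 0 < (M ^ k) i j


/-- `T` is a star: some centre is adjacent to exactly the other vertices, and
there are no other edges. -/
def IsStar {n : ℕ} (T : SimpleGraph (Fin n)) : Prop :=
  ∃ c : Fin n, ∀ a b : Fin n, T.Adj a b ↔ (a ≠ b ∧ (a = c ∨ b = c))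

/-- The all-ones matrix. -/
def Jmat (n : ℕ) : Matrix (Fin n) (Fin n) ℝ := Matrix.of fun _ _ => 1

section KelmansHelpers
variable {n : ℕ} {T : SimpleGraph (Fin n)} {u v : Fin n}

lemma kel_adj_iff {a b : Fin n} :
    (kelmans T u v).Adj a b ↔
      (T.Adj a b ∧ ¬(a = v ∧ ¬T.Adj u b ∧ b ≠ u) ∧ ¬(b = v ∧ ¬T.Adj u a ∧ a ≠ u)) ∨
      (a = u ∧ T.Adj v b ∧ ¬T.Adj u b ∧ b ≠ u) ∨
      (b = u ∧ T.Adj v a ∧ ¬T.Adj u a ∧ a ≠ u) := by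
  simp only [kelmans, SimpleGraph.fromRel_adj]
  constructor
  · rintro ⟨hab, (⟨h1, h2, h3⟩ | ⟨h1, h2, h3⟩) | (⟨h1, h2, h3⟩ | ⟨h1, h2, h3⟩)⟩
    · exact Or.inl ⟨h1, h2, h3⟩
    · exact Or.inr (Or.inl ⟨h1, h2, h3⟩)
    · exact Or.inl ⟨h1.symm, h3, h2⟩
    · exact Or.inr (Or.inr ⟨h1, h2, h3⟩)
  · rintro (⟨h1, h2, h3⟩ | ⟨h1, h2, h3⟩ | ⟨h1, h2, h3⟩)
    · exact ⟨h1.ne, Or.inl (Or.inl ⟨h1, h2, h3⟩)⟩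
    · refine ⟨?_, Or.inl (Or.inr ⟨h1, h2, h3⟩)⟩
      exact fun e => h3.2 (e.symm.trans h1)
    · refine ⟨?_, Or.inr (Or.inr ⟨h1, h2, h3⟩)⟩
      exact fun e => h3.2 (e.trans h1)

lemma kel_E1 {a b : Fin n} (h : T.Adj a b) (ha : a ≠ v) (hb : b ≠ v) :
    (kelmans T u v).Adj a b := by
  refine kel_adj_iff.mpr (Or.inl ⟨h, ?_, ?_⟩) <;> rintro ⟨rfl, -⟩ <;> simp_all

lemma kel_E2 (huv : T.Adj u v) : (kelmans T u v).Adj u v := by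
  refine kel_adj_iff.mpr (Or.inl ⟨huv, ?_, ?_⟩)
  · rintro ⟨rfl, -⟩; exact huv.ne rfl
  · rintro ⟨-, -, h⟩; exact h rfl

lemma kel_E3 {z : Fin n} (huv : T.Adj u v)
    (htri : ∀ w, T.Adj u w → T.Adj v w → False)
    (h : T.Adj v z) (hz : z ≠ u) : (kelmans T u v).Adj u z := by
  refine kel_adj_iff.mpr (Or.inr (Or.inl ⟨rfl, h, fun hc => htri z hc h, hz⟩))

lemma kel_E4 {a b : Fin n} (h : (kelmans T u v).Adj a b) :
    T.Adj a b ∨ (a = u ∧ T.Adj v b) ∨ (b = u ∧ T.Adj v a) := by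
  rcases kel_adj_iff.mp h with ⟨h1, -⟩ | ⟨h1, h2, -⟩ | ⟨h1, h2, -⟩
  · exact Or.inl h1
  · exact Or.inr (Or.inl ⟨h1, h2⟩)
  · exact Or.inr (Or.inr ⟨h1, h2⟩)

lemma kel_E5 {b : Fin n} (huv : T.Adj u v)
    (htri : ∀ w, T.Adj u w → T.Adj v w → False) :
    (kelmans T u v).Adj v b ↔ b = u := by
  constructor
  · intro h
    rcases kel_adj_iff.mp h with ⟨h1, h2, -⟩ | ⟨h1, -⟩ | ⟨h1, h2, -⟩
    · by_contra hbu
      refine h2 ⟨rfl, fun hub => htri b hub h1, hbu⟩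
    · exact absurd h1.symm huv.ne
    · exact absurd h2 (T.irrefl)
  · rintro rfl; exact (kel_E2 huv).symm

lemma kel_adj_u {b : Fin n} (huv : T.Adj u v)
    (htri : ∀ w, T.Adj u w → T.Adj v w → False) :
    (kelmans T u v).Adj u b ↔ T.Adj u b ∨ (T.Adj v b ∧ b ≠ u) := by
  constructor
  · intro h
    rcases kel_adj_iff.mp h with ⟨h1, -⟩ | ⟨-, h2, -, h4⟩ | ⟨-, -, -, h4⟩
    · exact Or.inl h1
    · exact Or.inr ⟨h2, h4⟩
    · exact absurd rfl h4
  · rintro (h | ⟨h, hb⟩)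
    · by_cases hbv : b = v
      · subst hbv; exact kel_E2 huv
      · exact kel_E1 h huv.ne hbv
    · exact kel_E3 huv htri h hb

lemma kel_adj_x {x b : Fin n} (huv : T.Adj u v)
    (htri : ∀ w, T.Adj u w → T.Adj v w → False)
    (hxu : x ≠ u) (hxv : x ≠ v) :
    (kelmans T u v).Adj x b ↔ (T.Adj x b ∧ b ≠ v) ∨ (b = u ∧ (T.Adj x u ∨ T.Adj x v)) := by
  constructor
  · intro h
    rcases kel_adj_iff.mp h with ⟨h1, -, h3⟩ | ⟨h1, -⟩ | ⟨h1, h2, -⟩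
    · by_cases hbv : b = v
      · subst hbv
        exfalso
        refine h3 ⟨rfl, fun hux => htri x hux h1.symm, hxu⟩
      · exact Or.inl ⟨h1, hbv⟩
    · exact absurd h1 hxu
    · exact Or.inr ⟨h1, Or.inr h2.symm⟩
  · rintro (⟨h, hbv⟩ | ⟨rfl, h | h⟩)
    · exact kel_E1 h hxv hbv
    · exact kel_E1 h hxv huv.ne
    · exact (kel_E3 huv htri h.symm hxu).symm


lemma tree_no_common (hT : T.IsTree) (huv : T.Adj u v) :
    ∀ w, T.Adj u w → T.Adj v w → False := by
  intro w h1 h2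
  obtain ⟨p₀, hp₀, huniq⟩ := hT.existsUnique_path u w
  have hP1 : (Walk.cons h1 Walk.nil).IsPath := by
    simp [Walk.cons_isPath_iff, h1.ne]
  have hP2 : (Walk.cons huv (Walk.cons h2 Walk.nil)).IsPath := by
    simp [Walk.cons_isPath_iff, h2.ne, huv.ne, h1.ne]
  have e1 := huniq _ hP1
  have e2 := huniq _ hP2
  have := congrArg Walk.length (e1.trans e2.symm)
  simp [Walk.length_cons] at this

lemma keyF (huv : T.Adj u v) (htri : ∀ w, T.Adj u w → T.Adj v w → False) :
    ∀ {x y : Fin n} (W : T.Walk x y), y ≠ v →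
      ∃ P : (kelmans T u v).Walk (if x = v then u else x) y, P.length ≤ W.length := by
  intro x y W
  induction W with
  | nil =>
    intro hy
    rw [if_neg hy]
    exact ⟨Walk.nil, le_rfl⟩
  | @cons x z y h W ih =>
    intro hy
    by_cases hzv : z = v
    · subst hzv
      rw [if_pos rfl] at ih
      obtain ⟨P, hP⟩ := ih hy
      have hxv : x ≠ z := h.ne
      rw [if_neg hxv]
      by_cases hxu : x = u
      · subst hxu
        exact ⟨P, hP.trans (by simp [Walk.length_cons])⟩
      · exact ⟨Walk.cons ((kel_E3 huv htri h.symm hxu).symm) P,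
          by simp only [Walk.length_cons]; omega⟩
    · rw [if_neg hzv] at ih
      obtain ⟨P, hP⟩ := ih hy
      by_cases hxv : x = v
      · subst hxv
        rw [if_pos rfl]
        by_cases hzu : z = u
        · subst hzu
          exact ⟨P, hP.trans (by simp [Walk.length_cons])⟩
        · exact ⟨Walk.cons (kel_E3 huv htri h hzu) P,
            by simp only [Walk.length_cons]; omega⟩
      · rw [if_neg hxv]
        exact ⟨Walk.cons (kel_E1 h hxv hzv) P, by simp only [Walk.length_cons]; omega⟩

lemma keyR1 : ∀ {x y : Fin n} (W : (kelmans T u v).Walk x y), u ∉ W.support →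
    ∃ P : T.Walk x y, P.length ≤ W.length := by
  intro x y W
  induction W with
  | nil => exact fun _ => ⟨Walk.nil, le_rfl⟩
  | @cons x z y h W ih =>
    intro hu
    rw [Walk.support_cons, List.mem_cons] at hu
    push_neg at hu
    obtain ⟨hxu, huW⟩ := hu
    obtain ⟨P, hP⟩ := ih huW
    have hzu : z ≠ u := fun e => huW (e ▸ W.start_mem_support)
    rcases kel_E4 h with h' | ⟨h1, -⟩ | ⟨h1, -⟩
    · exact ⟨Walk.cons h' P, by simp only [Walk.length_cons]; omega⟩
    · exact absurd h1.symm hxu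
    · exact absurd h1 hzu

lemma keyR2 (huv : T.Adj u v) : ∀ {x y : Fin n} (W : (kelmans T u v).Walk x y),
    W.IsPath → ∃ P : T.Walk x y, P.length ≤ W.length + 1 := by
  intro x y W
  induction W with
  | nil => exact fun _ => ⟨Walk.nil, by simp⟩
  | @cons x z y h W ih =>
    intro hp
    rw [Walk.cons_isPath_iff] at hp
    obtain ⟨hWp, hxW⟩ := hp
    rcases kel_E4 h with h' | ⟨rfl, hvz⟩ | ⟨rfl, hvx⟩
    · obtain ⟨P, hP⟩ := ih hWp
      exact ⟨Walk.cons h' P, by simp only [Walk.length_cons]; omega⟩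
    · obtain ⟨P, hP⟩ := keyR1 W hxW
      exact ⟨Walk.cons huv (Walk.cons hvz P), by simp only [Walk.length_cons]; omega⟩
    · cases W with
      | nil =>
        exact ⟨Walk.cons hvx.symm (Walk.cons huv.symm Walk.nil),
          by simp [Walk.length_cons]⟩
      | @cons _ z₂ _ h₂ W₂ =>
        rw [Walk.cons_isPath_iff] at hWp
        obtain ⟨hW₂p, huW₂⟩ := hWp
        obtain ⟨P₂, hP₂⟩ := keyR1 W₂ huW₂
        rcases kel_E4 h₂ with h₂' | ⟨-, hvz₂⟩ | ⟨hz₂, -⟩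
        · exact ⟨Walk.cons hvx.symm (Walk.cons huv.symm (Walk.cons h₂' P₂)),
            by simp only [Walk.length_cons]; omega⟩
        · exact ⟨Walk.cons hvx.symm (Walk.cons hvz₂ P₂),
            by simp only [Walk.length_cons]; omega⟩
        · exact absurd hz₂ h₂.ne'


lemma distSet_bddAbove (G : SimpleGraph (Fin n)) :
    BddAbove {d : ℕ | ∃ x y : Fin n, G.dist x y = d} := by
  refine ⟨n, ?_⟩
  rintro d ⟨x, y, rfl⟩
  by_cases hr : G.Reachable x y
  · obtain ⟨W⟩ := hr
    have h1 : G.dist x y ≤ W.bypass.length := SimpleGraph.dist_le _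
    have h2 : W.bypass.length < Fintype.card (Fin n) := W.bypass_isPath.length_lt
    rw [Fintype.card_fin] at h2
    omega
  · rw [SimpleGraph.dist_eq_zero_of_not_reachable hr]
    exact Nat.zero_le _

lemma dist_le_gdiam (G : SimpleGraph (Fin n)) (x y : Fin n) :
    G.dist x y ≤ gdiam G :=
  le_csSup (distSet_bddAbove G) ⟨x, y, rfl⟩

lemma ecc_gt_branch (hT : T.IsTree) {a₁ a₂ : Fin n} (h1 : T.Adj u a₁) (h2 : T.Adj u a₂)
    (hne₁₂ : a₁ ≠ a₂) (x : Fin n) :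
    ∃ t : Fin n, T.dist x u + 1 ≤ T.dist x t := by
  by_cases hxu : x = u
  · refine ⟨a₁, ?_⟩
    rw [hxu, SimpleGraph.dist_self]
    exact hT.isConnected.pos_dist_of_ne (hxu ▸ h1.ne)
  · obtain ⟨P₀, hP₀, -⟩ := hT.existsUnique_path x u
    have upath : ∀ (Q : T.Walk u x), Q.IsPath → Q = P₀.reverse := by
      intro Q hQ
      obtain ⟨R₀, -, hRu⟩ := hT.existsUnique_path u x
      rw [hRu Q hQ, hRu P₀.reverse hP₀.reverse]
    cases heq : P₀.reverse with
    | nil => exact absurd rfl hxu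
    | @cons _ p _ h q =>
      classical
      set t := if p = a₁ then a₂ else a₁ with ht
      have htu : T.Adj u t := by
        by_cases hp : p = a₁ <;> simp [ht, hp, h1, h2]
      have htp : t ≠ p := by
        by_cases hp : p = a₁ <;> intro e <;> simp [ht, hp] at e
        · exact hne₁₂ e.symm
        · exact hp e.symm
      refine ⟨t, ?_⟩
      obtain ⟨W, hWlen⟩ :=
        ((hT.isConnected.preconnected x t)).exists_walk_length_eq_dist
      have hQp := W.bypass_isPath
      have hQl : W.bypass.length ≤ T.dist x t := hWlen ▸ W.length_bypass_le
      by_cases hu : u ∈ W.bypass.support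
      · have hsplit := congrArg Walk.length (W.bypass.take_spec hu)
        rw [Walk.length_append] at hsplit
        have hd : T.dist x u ≤ (W.bypass.takeUntil u hu).length := SimpleGraph.dist_le _
        have hnz : (W.bypass.dropUntil u hu).length ≠ 0 := fun e =>
          htu.ne (Walk.eq_of_length_eq_zero e)
        omega
      · exfalso
        have hQ' : (Walk.cons htu W.bypass.reverse).IsPath := by
          rw [Walk.cons_isPath_iff]
          exact ⟨hQp.reverse, by simpa using hu⟩
        have hEq := upath _ hQ'
        rw [heq] at hEq
        have hsupp := congrArg Walk.support hEq
        rw [Walk.support_cons, Walk.support_cons] at hsupp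
        have h3 : W.bypass.reverse.support = q.support := by
          injection hsupp
        rw [W.bypass.reverse.support_eq_cons, q.support_eq_cons] at h3
        injection h3 with h4 _
        exact htp h4


lemma deg_two_le (huv : T.Adj u v) (hdu : deg T u ≠ 1) : 2 ≤ deg T u := by
  have : 0 < deg T u := (Set.ncard_pos (Set.toFinite _)).mpr ⟨v, huv⟩
  omega

lemma exists_other_neighbor (huv : T.Adj u v) (hdu : deg T u ≠ 1) :
    ∃ a : Fin n, T.Adj u a ∧ a ≠ v := by
  have h2 : 2 ≤ deg T u := deg_two_le huv hdu
  have hcard : (T.neighborSet u \ {v}).ncard = deg T u - 1 :=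
    Set.ncard_diff_singleton_of_mem huv
  have : (T.neighborSet u \ {v}).Nonempty := by
    rw [← Set.ncard_pos (Set.toFinite _)]
    omega
  obtain ⟨a, ha, hav⟩ := this
  exact ⟨a, ha, hav⟩

lemma deg_kel_v (huv : T.Adj u v) (htri : ∀ w, T.Adj u w → T.Adj v w → False) :
    deg (kelmans T u v) v = 1 := by
  have : (kelmans T u v).neighborSet v = {u} := by
    ext b
    simp only [SimpleGraph.mem_neighborSet, Set.mem_singleton_iff]
    exact kel_E5 huv htri
  rw [deg, this, Set.ncard_singleton]

lemma deg_kel_u (huv : T.Adj u v) (htri : ∀ w, T.Adj u w → T.Adj v w → False) :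
    deg (kelmans T u v) u = deg T u + (deg T v - 1) := by
  have hset : (kelmans T u v).neighborSet u
      = T.neighborSet u ∪ (T.neighborSet v \ {u}) := by
    ext b
    simp only [SimpleGraph.mem_neighborSet, Set.mem_union, Set.mem_diff,
      Set.mem_singleton_iff]
    exact kel_adj_u huv htri
  have hdisj : Disjoint (T.neighborSet u) (T.neighborSet v \ {u}) := by
    rw [Set.disjoint_left]
    rintro b hb ⟨hb2, -⟩
    exact htri b hb hb2
  have h3 : (T.neighborSet v \ {u}).ncard = deg T v - 1 :=
    Set.ncard_diff_singleton_of_mem huv.symm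
  rw [deg, hset, Set.ncard_union_eq hdisj, h3]
  rfl

lemma deg_kel_x (huv : T.Adj u v) (htri : ∀ w, T.Adj u w → T.Adj v w → False)
    {x : Fin n} (hxu : x ≠ u) (hxv : x ≠ v) :
    deg (kelmans T u v) x = deg T x := by
  by_cases hxvadj : T.Adj x v
  · have hxuadj : ¬T.Adj x u := fun hc => htri x hc.symm hxvadj.symm
    have hset : (kelmans T u v).neighborSet x
        = insert u (T.neighborSet x \ {v}) := by
      ext b
      simp only [SimpleGraph.mem_neighborSet, Set.mem_insert_iff, Set.mem_diff,
        Set.mem_singleton_iff]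
      rw [kel_adj_x huv htri hxu hxv]
      constructor
      · rintro (⟨h1, h2⟩ | ⟨h1, -⟩)
        · exact Or.inr ⟨h1, h2⟩
        · exact Or.inl h1
      · rintro (h1 | ⟨h1, h2⟩)
        · exact Or.inr ⟨h1, Or.inr hxvadj⟩
        · exact Or.inl ⟨h1, h2⟩
    have hu : u ∉ T.neighborSet x \ {v} := fun hc => hxuadj hc.1
    have hpos : 0 < deg T x := (Set.ncard_pos (Set.toFinite _)).mpr ⟨v, hxvadj⟩
    have h3 : (T.neighborSet x \ {v}).ncard = deg T x - 1 :=
      Set.ncard_diff_singleton_of_mem hxvadj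
    rw [deg, hset, Set.ncard_insert_of_notMem hu, h3]
    omega
  · have hset : (kelmans T u v).neighborSet x = T.neighborSet x := by
      ext b
      simp only [SimpleGraph.mem_neighborSet]
      rw [kel_adj_x huv htri hxu hxv]
      constructor
      · rintro (⟨h1, -⟩ | ⟨h1, h2 | h2⟩)
        · exact h1
        · exact h1 ▸ h2
        · exact absurd h2 hxvadj
      · intro h1
        exact Or.inl ⟨h1, fun e => hxvadj (e ▸ h1)⟩
    rw [deg, hset, deg]

lemma pendants_main (huv : T.Adj u v) (htri : ∀ w, T.Adj u w → T.Adj v w → False)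
    (hdu : deg T u ≠ 1) (hdv : deg T v ≠ 1) :
    pendants (kelmans T u v) = pendants T + 1 := by
  have h2u : 2 ≤ deg T u := deg_two_le huv hdu
  have h2v : 2 ≤ deg T v := deg_two_le huv.symm hdv
  have hset : {x : Fin n | deg (kelmans T u v) x = 1}
      = insert v {x : Fin n | deg T x = 1} := by
    ext x
    simp only [Set.mem_setOf_eq, Set.mem_insert_iff]
    by_cases hxv : x = v
    · simp [hxv, deg_kel_v huv htri]
    · by_cases hxu : x = u
      · rw [hxu, deg_kel_u huv htri]
        constructor
        · intro h; omega
        · rintro (h | h)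
          · exact absurd h huv.ne
          · omega
      · rw [deg_kel_x huv htri hxu hxv]
        simp [hxv]
  rw [pendants, pendants, hset,
    Set.ncard_insert_of_notMem (a := v) (s := {x : Fin n | deg T x = 1})
      (fun hc => hdv hc)]


lemma kel_dist_le (hT : T.IsTree) (huv : T.Adj u v)
    (htri : ∀ w, T.Adj u w → T.Adj v w → False) {x y : Fin n}
    (hx : x ≠ v) (hy : y ≠ v) :
    (kelmans T u v).dist x y ≤ T.dist x y := by
  obtain ⟨W, hWlen⟩ := (hT.isConnected.preconnected x y).exists_walk_length_eq_dist
  obtain ⟨P, hP⟩ := keyF huv htri W hy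
  have e : (if x = v then u else x) = x := if_neg hx
  have := SimpleGraph.dist_le (P.copy e rfl)
  rw [Walk.length_copy] at this
  omega

lemma gdiam_le_main (hT : T.IsTree) (hT₁ : (kelmans T u v).IsTree) (huv : T.Adj u v)
    (htri : ∀ w, T.Adj u w → T.Adj v w → False)
    {a : Fin n} (hau : T.Adj u a) (hav : a ≠ v) :
    gdiam (kelmans T u v) ≤ gdiam T := by
  have hKxv : ∀ x : Fin n, x ≠ v → (kelmans T u v).dist x v ≤ gdiam T := by
    intro x hx
    have h1 : (kelmans T u v).dist x v
        ≤ (kelmans T u v).dist x u + (kelmans T u v).dist u v :=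
      hT₁.isConnected.dist_triangle
    have h2 : (kelmans T u v).dist u v ≤ 1 := by
      have := SimpleGraph.dist_le (Walk.cons (kel_E2 huv) Walk.nil)
      simpa using this
    have h3 : (kelmans T u v).dist x u ≤ T.dist x u :=
      kel_dist_le hT huv htri hx huv.ne
    obtain ⟨t, ht⟩ := ecc_gt_branch hT hau huv hav x
    have h4 : T.dist x t ≤ gdiam T := dist_le_gdiam T x t
    omega
  refine csSup_le ⟨0, u, u, SimpleGraph.dist_self⟩ ?_
  rintro d ⟨x, y, rfl⟩
  by_cases hy : y = v
  · by_cases hx : x = v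
    · rw [hx, hy, SimpleGraph.dist_self]
      exact Nat.zero_le _
    · rw [hy]
      exact hKxv x hx
  · by_cases hx : x = v
    · rw [SimpleGraph.dist_comm, hx]
      exact hKxv y hy
    · exact (kel_dist_le hT huv htri hx hy).trans (dist_le_gdiam T x y)

lemma gdiam_ge_main (hT₁ : (kelmans T u v).IsTree) (huv : T.Adj u v) :
    gdiam T ≤ gdiam (kelmans T u v) + 1 := by
  refine csSup_le ⟨0, u, u, SimpleGraph.dist_self⟩ ?_
  rintro d ⟨x, y, rfl⟩
  obtain ⟨W, hWlen⟩ := (hT₁.isConnected.preconnected x y).exists_walk_length_eq_dist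
  obtain ⟨P, hP⟩ := keyR2 huv W.bypass W.bypass_isPath
  have h1 : T.dist x y ≤ P.length := SimpleGraph.dist_le P
  have h2 : W.bypass.length ≤ W.length := W.length_bypass_le
  have h3 : (kelmans T u v).dist x y ≤ gdiam (kelmans T u v) :=
    dist_le_gdiam _ x y
  omega


lemma kel_eq_self (huv : T.Adj u v) (hv1 : ∀ b, T.Adj v b ↔ b = u) :
    kelmans T u v = T := by
  ext a b
  rw [kel_adj_iff]
  constructor
  · rintro (⟨h1, -⟩ | ⟨-, h2, -, h4⟩ | ⟨-, h2, -, h4⟩)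
    · exact h1
    · exact absurd ((hv1 b).mp h2) h4
    · exact absurd ((hv1 a).mp h2) h4
  · intro h
    refine Or.inl ⟨h, ?_, ?_⟩
    · intro hc
      obtain ⟨e1, -, e3⟩ := hc
      apply e3
      apply (hv1 b).mp
      rw [← e1]
      exact h
    · intro hc
      obtain ⟨e1, -, e3⟩ := hc
      apply e3
      apply (hv1 a).mp
      rw [← e1]
      exact h.symm

lemma kel_iso_swap (huv : T.Adj u v) (htri : ∀ w, T.Adj u w → T.Adj v w → False)
    (hu1 : ∀ b, T.Adj u b ↔ b = v) :
    Nonempty ((kelmans T u v) ≃g T) := by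
  refine ⟨⟨Equiv.swap u v, @fun a b => ?_⟩⟩
  by_cases hau : a = u
  · rw [hau, Equiv.swap_apply_left]
    by_cases hbu : b = u
    · rw [hbu, Equiv.swap_apply_left]
      exact iff_of_false (T.irrefl) ((kelmans T u v).irrefl)
    · by_cases hbv : b = v
      · rw [hbv, Equiv.swap_apply_right]
        exact iff_of_true huv.symm (kel_E2 huv)
      · rw [Equiv.swap_apply_of_ne_of_ne hbu hbv, kel_adj_u huv htri, hu1 b]
        constructor
        · intro h
          exact Or.inr ⟨h, hbu⟩
        · rintro (h | ⟨h, -⟩)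
          · exact absurd h hbv
          · exact h
  · by_cases hav : a = v
    · rw [hav, Equiv.swap_apply_right]
      by_cases hbu : b = u
      · rw [hbu, Equiv.swap_apply_left]
        exact iff_of_true huv ((kel_E2 huv).symm)
      · by_cases hbv : b = v
        · rw [hbv, Equiv.swap_apply_right]
          exact iff_of_false (T.irrefl) ((kelmans T u v).irrefl)
        · rw [Equiv.swap_apply_of_ne_of_ne hbu hbv, hu1 b, kel_E5 huv htri]
          exact ⟨fun h => absurd h hbv, fun h => absurd h hbu⟩
    · rw [Equiv.swap_apply_of_ne_of_ne hau hav]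
      by_cases hbu : b = u
      · rw [hbu, Equiv.swap_apply_left]
        constructor
        · intro h
          exact ((kel_adj_u huv htri).mpr (Or.inr ⟨h.symm, hau⟩)).symm
        · intro h
          rcases (kel_adj_u huv htri).mp h.symm with h' | ⟨h', -⟩
          · exact absurd ((hu1 a).mp h') hav
          · exact h'.symm
      · by_cases hbv : b = v
        · rw [hbv, Equiv.swap_apply_right]
          refine iff_of_false (fun h => hav ((hu1 a).mp h.symm)) ?_
          exact fun h => hau ((kel_E5 huv htri).mp h.symm)
        · rw [Equiv.swap_apply_of_ne_of_ne hbu hbv, kel_adj_x huv htri hau hav]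
          constructor
          · intro h
            exact Or.inl ⟨h, hbv⟩
          · rintro (⟨h, -⟩ | ⟨e, -⟩)
            · exact h
            · exact absurd e hbu

lemma neighbor_unique (huv : T.Adj u v) (hdu : deg T u = 1) :
    ∀ b, T.Adj u b ↔ b = v := by
  obtain ⟨a, ha⟩ := Set.ncard_eq_one.mp hdu
  have hv' : v ∈ T.neighborSet u := huv
  rw [ha, Set.mem_singleton_iff] at hv'
  intro b
  rw [← SimpleGraph.mem_neighborSet, ha, Set.mem_singleton_iff, hv']

end KelmansHelpers


theorem stmt_9 (n : ℕ) (T : SimpleGraph (Fin n)) (hT : T.IsTree)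
    (u v : Fin n) (huv : T.Adj u v) (T₁ : SimpleGraph (Fin n))
    (hT₁def : T₁ = kelmans T u v) (hT₁ : T₁.IsTree) :
    Nonempty (T₁ ≃g T) ∨
      (pendants T₁ = pendants T + 1 ∧
        (gdiam T₁ = gdiam T ∨ gdiam T₁ + 1 = gdiam T)) := by
  classical
  subst hT₁def
  have htri : ∀ w, T.Adj u w → T.Adj v w → False := tree_no_common hT huv
  by_cases hdv : deg T v = 1
  · left
    have hv1 : ∀ b, T.Adj v b ↔ b = u := neighbor_unique huv.symm hdv
    rw [kel_eq_self huv hv1]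
    exact ⟨RelIso.refl _⟩
  · by_cases hdu : deg T u = 1
    · left
      exact kel_iso_swap huv htri (neighbor_unique huv hdu)
    · right
      obtain ⟨a, hau, hav⟩ := exists_other_neighbor huv hdu
      refine ⟨pendants_main huv htri hdu hdv, ?_⟩
      have h1 := gdiam_le_main hT hT₁ huv htri hau hav
      have h2 := gdiam_ge_main hT₁ huv
      omega
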